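/- (H-step lookahead policy bound.) In a finite discounted MDP, let M̂ be an approximate transition model with D_TV(p(·|s,a), M̂(·|s,a)) ≤ ε_m for all (s,a) ∈ S×A, let V̂ : S → ℝ satisfy max_{s∈S} |V*(s) − V̂(s)| ≤ ε_v, let 0 ≤ r(s,a) ≤ Rmax for all (s,a), and let 0 ≤ V̂(s) ≤ Vmax for all s. Fix a horizon H ≥ 1 and let W : S → ℝ be the value of the H-step lookahead policy π_{H,V̂} (for any choice of maximizers π^s). Then for every state s0, V*(s0) − W(s0) ≤ (2/(1−γ^H))·[C(ε_m,H,γ) + γ^H·ε_v], where C(ε_m,H,γ) = Rmax·Σ_{t=0}^{H−1} γ^t·t·ε_m + γ^H·H·ε_m·Vmax. -/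

import Mathlib

/-- State distribution at time `t` of a (possibly non-stationary) deterministic policy `π`
started from `s0`, under transition model `N`. -/
noncomputable def stateDist {S A : Type*} [Fintype S] [DecidableEq S]
    (N : S → A → S → ℝ) (π : ℕ → S → A) (s0 : S) : ℕ → S → ℝ
  | 0 => fun s => if s = s0 then 1 else 0
  | t + 1 => fun s' => ∑ s : S, stateDist N π s0 t s * N s (π t s) s'

/-- Discounted value of a (possibly non-stationary) deterministic policy. -/
noncomputable def value {S A : Type*} [Fintype S] [DecidableEq S]
    (p : S → A → S → ℝ) (r : S → A → ℝ) (γ : ℝ) (π : ℕ → S → A) (s0 : S) : ℝ :=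
  ∑' t : ℕ, γ ^ t * ∑ s : S, stateDist p π s0 t s * r s (π t s)

/-- Optimal value function: supremum of values over all deterministic policies. -/
noncomputable def vStar {S A : Type*} [Fintype S] [DecidableEq S]
    (p : S → A → S → ℝ) (r : S → A → ℝ) (γ : ℝ) (s0 : S) : ℝ :=
  ⨆ π : ℕ → S → A, value p r γ π s0

/-- H-step lookahead objective of an H-step policy `π` (only its first `H` maps are used),
under transition model `N`, with terminal value function `Vhat`. -/
noncomputable def lookahead {S A : Type*} [Fintype S] [DecidableEq S]
    (N : S → A → S → ℝ) (r : S → A → ℝ) (γ : ℝ) (Vhat : S → ℝ) (H : ℕ)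
    (π : ℕ → S → A) (s : S) : ℝ :=
  (∑ t ∈ Finset.range H, γ ^ t * ∑ s' : S, stateDist N π s t s' * r s' (π t s')) +
    γ ^ H * ∑ s' : S, stateDist N π s H s' * Vhat s'

section Aux
variable {S A : Type*} [Fintype S] [DecidableEq S]

lemma stateDist_nonneg {N : S → A → S → ℝ} (hN : ∀ s a s', 0 ≤ N s a s')
    (π : ℕ → S → A) (s0 : S) : ∀ t s, 0 ≤ stateDist N π s0 t s := by
  intro t
  induction t with
  | zero => intro s; simp only [stateDist]; split <;> norm_num
  | succ t ih =>
      intro s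
      simp only [stateDist]
      exact Finset.sum_nonneg fun x _ => mul_nonneg (ih x) (hN _ _ _)

lemma stateDist_sum {N : S → A → S → ℝ} (hNsum : ∀ s a, ∑ s' : S, N s a s' = 1)
    (π : ℕ → S → A) (s0 : S) : ∀ t, ∑ s : S, stateDist N π s0 t s = 1 := by
  intro t
  induction t with
  | zero => simp [stateDist]
  | succ t ih =>
      simp only [stateDist]
      rw [Finset.sum_comm]
      calc ∑ s : S, ∑ s' : S, stateDist N π s0 t s * N s (π t s) s'
          = ∑ s : S, stateDist N π s0 t s * ∑ s' : S, N s (π t s) s' := by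
            simp [Finset.mul_sum]
        _ = 1 := by simp [hNsum, ih]

lemma stateDist_shift (N : S → A → S → ℝ) (π : ℕ → S → A) (s0 : S) (H : ℕ) :
    ∀ k s, stateDist N π s0 (H + k) s
      = ∑ s' : S, stateDist N π s0 H s' * stateDist N (fun t => π (H + t)) s' k s := by
  intro k
  induction k with
  | zero =>
      intro s
      simp only [Nat.add_zero, stateDist, mul_ite, mul_one, mul_zero, Finset.sum_ite_eq]
      simp
  | succ k ih =>
      intro s
      show (∑ s1 : S, stateDist N π s0 (H + k) s1 * N s1 (π (H + k) s1) s) = _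
      calc (∑ s1 : S, stateDist N π s0 (H + k) s1 * N s1 (π (H + k) s1) s)
          = ∑ s1 : S, ∑ s' : S, stateDist N π s0 H s' *
              (stateDist N (fun t => π (H + t)) s' k s1 * N s1 (π (H + k) s1) s) := by
            simp_rw [ih, Finset.sum_mul, mul_assoc]
        _ = ∑ s' : S, stateDist N π s0 H s' *
              ∑ s1 : S, stateDist N (fun t => π (H + t)) s' k s1 * N s1 (π (H + k) s1) s := by
            rw [Finset.sum_comm]; simp_rw [Finset.mul_sum]
        _ = _ := rfl

lemma summable_val {N : S → A → S → ℝ} (hN : ∀ s a s', 0 ≤ N s a s')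
    (hNsum : ∀ s a, ∑ s' : S, N s a s' = 1) {r : S → A → ℝ} {Rmax γ : ℝ}
    (hr0 : ∀ s a, 0 ≤ r s a) (hrmax : ∀ s a, r s a ≤ Rmax)
    (hγ0 : 0 ≤ γ) (hγ1 : γ < 1) (π : ℕ → S → A) (s0 : S) :
    Summable (fun t => γ ^ t * ∑ s : S, stateDist N π s0 t s * r s (π t s)) := by
  apply Summable.of_nonneg_of_le
  · intro t
    exact mul_nonneg (pow_nonneg hγ0 t) (Finset.sum_nonneg fun s _ =>
      mul_nonneg (stateDist_nonneg hN π s0 t s) (hr0 _ _))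
  · intro t
    show γ ^ t * _ ≤ Rmax * γ ^ t
    rw [mul_comm Rmax (γ ^ t)]
    apply mul_le_mul_of_nonneg_left _ (pow_nonneg hγ0 t)
    calc ∑ s : S, stateDist N π s0 t s * r s (π t s)
        ≤ ∑ s : S, stateDist N π s0 t s * Rmax :=
          Finset.sum_le_sum fun s _ =>
            mul_le_mul_of_nonneg_left (hrmax _ _) (stateDist_nonneg hN π s0 t s)
      _ = Rmax := by rw [← Finset.sum_mul, stateDist_sum hNsum, one_mul]
  · exact (summable_geometric_of_lt_one hγ0 hγ1).mul_left Rmax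

lemma value_le {N : S → A → S → ℝ} (hN : ∀ s a s', 0 ≤ N s a s')
    (hNsum : ∀ s a, ∑ s' : S, N s a s' = 1) {r : S → A → ℝ} {Rmax γ : ℝ}
    (hr0 : ∀ s a, 0 ≤ r s a) (hrmax : ∀ s a, r s a ≤ Rmax)
    (hγ0 : 0 ≤ γ) (hγ1 : γ < 1) (π : ℕ → S → A) (s0 : S) :
    value N r γ π s0 ≤ Rmax * (1 - γ)⁻¹ := by
  have h1 := summable_val hN hNsum hr0 hrmax hγ0 hγ1 π s0
  have h2 : Summable (fun t : ℕ => Rmax * γ ^ t) :=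
    (summable_geometric_of_lt_one hγ0 hγ1).mul_left Rmax
  calc value N r γ π s0 ≤ ∑' t : ℕ, Rmax * γ ^ t := by
        apply Summable.tsum_le_tsum _ h1 h2
        intro t
        show γ ^ t * _ ≤ Rmax * γ ^ t
        rw [mul_comm Rmax (γ ^ t)]
        apply mul_le_mul_of_nonneg_left _ (pow_nonneg hγ0 t)
        calc ∑ s : S, stateDist N π s0 t s * r s (π t s)
            ≤ ∑ s : S, stateDist N π s0 t s * Rmax :=
              Finset.sum_le_sum fun s _ =>
                mul_le_mul_of_nonneg_left (hrmax _ _) (stateDist_nonneg hN π s0 t s)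
          _ = Rmax := by rw [← Finset.sum_mul, stateDist_sum hNsum, one_mul]
    _ = Rmax * (1 - γ)⁻¹ := by
        rw [tsum_mul_left, tsum_geometric_of_lt_one hγ0 hγ1]

lemma value_decomp {N : S → A → S → ℝ} (hN : ∀ s a s', 0 ≤ N s a s')
    (hNsum : ∀ s a, ∑ s' : S, N s a s' = 1) {r : S → A → ℝ} {Rmax γ : ℝ}
    (hr0 : ∀ s a, 0 ≤ r s a) (hrmax : ∀ s a, r s a ≤ Rmax)
    (hγ0 : 0 ≤ γ) (hγ1 : γ < 1) (π : ℕ → S → A) (s0 : S) (H : ℕ) :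
    value N r γ π s0 =
      (∑ t ∈ Finset.range H, γ ^ t * ∑ s : S, stateDist N π s0 t s * r s (π t s))
        + γ ^ H * ∑ s' : S, stateDist N π s0 H s' * value N r γ (fun t => π (H + t)) s' := by
  have hs := summable_val hN hNsum hr0 hrmax hγ0 hγ1 π s0
  rw [value, ← Summable.sum_add_tsum_nat_add H hs]
  congr 1
  have key : ∀ i : ℕ, γ ^ (i + H) * ∑ s : S, stateDist N π s0 (i + H) s * r s (π (i + H) s)
      = ∑ s' : S, stateDist N π s0 H s' *
          (γ ^ H * (γ ^ i * ∑ s : S, stateDist N (fun t => π (H + t)) s' i s *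
            r s (π (H + i) s))) := by
    intro i
    rw [add_comm i H]
    simp_rw [stateDist_shift N π s0 H i, Finset.sum_mul, Finset.mul_sum]
    rw [Finset.sum_comm]
    refine Finset.sum_congr rfl fun s' _ => Finset.sum_congr rfl fun s _ => ?_
    rw [pow_add]
    ring
  calc ∑' i : ℕ, γ ^ (i + H) * ∑ s : S, stateDist N π s0 (i + H) s * r s (π (i + H) s)
      = ∑' i : ℕ, ∑ s' : S, stateDist N π s0 H s' *
          (γ ^ H * (γ ^ i * ∑ s : S, stateDist N (fun t => π (H + t)) s' i s *
            r s (π (H + i) s))) := by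
        exact tsum_congr key
    _ = ∑ s' : S, ∑' i : ℕ, stateDist N π s0 H s' *
          (γ ^ H * (γ ^ i * ∑ s : S, stateDist N (fun t => π (H + t)) s' i s *
            r s (π (H + i) s))) := by
        apply Summable.tsum_finsetSum
        intro s' _
        apply Summable.mul_left
        apply Summable.mul_left
        have := summable_val hN hNsum hr0 hrmax hγ0 hγ1 (fun t => π (H + t)) s'
        simpa [mul_assoc] using this
    _ = γ ^ H * ∑ s' : S, stateDist N π s0 H s' * value N r γ (fun t => π (H + t)) s' := by
        rw [Finset.mul_sum]
        apply Finset.sum_congr rfl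
        intro s' _
        rw [tsum_mul_left, tsum_mul_left]
        show stateDist N π s0 H s' * (γ ^ H * value N r γ (fun t => π (H + t)) s') = _
        ring

lemma tv_accum [Nonempty S] {p M : S → A → S → ℝ} (hp0 : ∀ s a s', 0 ≤ p s a s')
    (hpsum : ∀ s a, ∑ s' : S, p s a s' = 1)
    (hM0 : ∀ s a s', 0 ≤ M s a s')
    (hMsum : ∀ s a, ∑ s' : S, M s a s' = 1) {εm : ℝ}
    (hTV : ∀ s a, ∑ s' : S, |p s a s' - M s a s'| ≤ 2 * εm)
    (π : ℕ → S → A) (s0 : S) :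
    ∀ t, ∑ s : S, |stateDist p π s0 t s - stateDist M π s0 t s| ≤ 2 * t * εm := by
  have hεm : 0 ≤ εm := by
    have := hTV (Classical.arbitrary S) (π 0 (Classical.arbitrary S))
    have h0 : (0:ℝ) ≤ ∑ s' : S, |p (Classical.arbitrary S) (π 0 (Classical.arbitrary S)) s'
        - M (Classical.arbitrary S) (π 0 (Classical.arbitrary S)) s'| :=
      Finset.sum_nonneg fun _ _ => abs_nonneg _
    linarith
  intro t
  induction t with
  | zero => simp [stateDist]
  | succ t ih =>
      push_cast
      have key : ∀ s' : S, |stateDist p π s0 (t+1) s' - stateDist M π s0 (t+1) s'|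
          ≤ ∑ s : S, (|stateDist p π s0 t s - stateDist M π s0 t s| * p s (π t s) s'
              + stateDist M π s0 t s * |p s (π t s) s' - M s (π t s) s'|) := by
        intro s'
        have heq : stateDist p π s0 (t+1) s' - stateDist M π s0 (t+1) s'
            = ∑ s : S, ((stateDist p π s0 t s - stateDist M π s0 t s) * p s (π t s) s'
                + stateDist M π s0 t s * (p s (π t s) s' - M s (π t s) s')) := by
          show (∑ s : S, stateDist p π s0 t s * p s (π t s) s')
              - (∑ s : S, stateDist M π s0 t s * M s (π t s) s') = _
          rw [← Finset.sum_sub_distrib]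
          exact Finset.sum_congr rfl fun s _ => by ring
        rw [heq]
        refine (Finset.abs_sum_le_sum_abs _ _).trans (Finset.sum_le_sum fun s _ => ?_)
        refine (abs_add_le _ _).trans ?_
        rw [abs_mul, abs_mul, abs_of_nonneg (hp0 _ _ _),
          abs_of_nonneg (stateDist_nonneg hM0 π s0 t s)]
      calc ∑ s' : S, |stateDist p π s0 (t+1) s' - stateDist M π s0 (t+1) s'|
          ≤ ∑ s' : S, ∑ s : S, (|stateDist p π s0 t s - stateDist M π s0 t s| * p s (π t s) s'
              + stateDist M π s0 t s * |p s (π t s) s' - M s (π t s) s'|) :=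
            Finset.sum_le_sum fun s' _ => key s'
        _ = ∑ s : S, (|stateDist p π s0 t s - stateDist M π s0 t s| * (∑ s' : S, p s (π t s) s')
              + stateDist M π s0 t s * ∑ s' : S, |p s (π t s) s' - M s (π t s) s'|) := by
            rw [Finset.sum_comm]
            exact Finset.sum_congr rfl fun s _ => by
              rw [Finset.sum_add_distrib, ← Finset.mul_sum, ← Finset.mul_sum]
        _ ≤ ∑ s : S, (|stateDist p π s0 t s - stateDist M π s0 t s| * 1
              + stateDist M π s0 t s * (2 * εm)) := by
            refine Finset.sum_le_sum fun s _ => add_le_add ?_ ?_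
            · exact mul_le_mul_of_nonneg_left (le_of_eq (hpsum _ _)) (abs_nonneg _)
            · exact mul_le_mul_of_nonneg_left (hTV _ _) (stateDist_nonneg hM0 π s0 t s)
        _ ≤ 2 * (t+1) * εm := by
            rw [Finset.sum_add_distrib]
            simp only [mul_one]
            rw [← Finset.sum_mul, stateDist_sum hMsum, one_mul]
            push_cast
            linarith

lemma mean_diff {μ ν f : S → ℝ} {B : ℝ} (hμ1 : ∑ s : S, μ s = 1) (hν1 : ∑ s : S, ν s = 1)
    (hf0 : ∀ s, 0 ≤ f s) (hfB : ∀ s, f s ≤ B) :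
    |(∑ s : S, μ s * f s) - ∑ s : S, ν s * f s| ≤ (B / 2) * ∑ s : S, |μ s - ν s| := by
  have heq : (∑ s : S, μ s * f s) - ∑ s : S, ν s * f s
      = ∑ s : S, (μ s - ν s) * (f s - B / 2) := by
    have : ∀ s : S, (μ s - ν s) * (f s - B / 2)
        = (μ s * f s - ν s * f s) - (μ s - ν s) * (B / 2) := fun s => by ring
    simp_rw [this, Finset.sum_sub_distrib, ← Finset.sum_mul]
    rw [Finset.sum_sub_distrib, hμ1, hν1]
    ring
  rw [heq]
  refine (Finset.abs_sum_le_sum_abs _ _).trans ?_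
  rw [Finset.mul_sum]
  refine Finset.sum_le_sum fun s _ => ?_
  rw [abs_mul, mul_comm (B / 2)]
  refine mul_le_mul_of_nonneg_left ?_ (abs_nonneg _)
  rw [abs_le]
  constructor
  · have := hf0 s; linarith
  · have := hfB s; linarith

lemma terminal_swap {d V1 V2 : S → ℝ} (hd0 : ∀ s, 0 ≤ d s) (hd1 : ∑ s : S, d s = 1)
    {ε : ℝ} (h : ∀ s, |V1 s - V2 s| ≤ ε) :
    |(∑ s : S, d s * V1 s) - ∑ s : S, d s * V2 s| ≤ ε := by
  rw [← Finset.sum_sub_distrib]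
  refine (Finset.abs_sum_le_sum_abs _ _).trans ?_
  calc ∑ s : S, |d s * V1 s - d s * V2 s| = ∑ s : S, d s * |V1 s - V2 s| := by
        refine Finset.sum_congr rfl fun s _ => ?_
        rw [← mul_sub, abs_mul, abs_of_nonneg (hd0 s)]
    _ ≤ ∑ s : S, d s * ε := Finset.sum_le_sum fun s _ =>
        mul_le_mul_of_nonneg_left (h s) (hd0 s)
    _ = ε := by rw [← Finset.sum_mul, hd1, one_mul]

end Aux

section Aux2
variable {S A : Type*} [Fintype S] [DecidableEq S]

lemma sum_mul_le_of_le {d g : S → ℝ} {D : ℝ}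
    (hd0 : ∀ s, 0 ≤ d s) (hd1 : ∑ s : S, d s = 1) (h : ∀ s, g s ≤ D) :
    ∑ s : S, d s * g s ≤ D := by
  calc ∑ s : S, d s * g s ≤ ∑ s : S, d s * D :=
        Finset.sum_le_sum fun s _ => mul_le_mul_of_nonneg_left (h s) (hd0 s)
    _ = D := by rw [← Finset.sum_mul, hd1, one_mul]

lemma lookahead_err [Nonempty S] {N M : S → A → S → ℝ}
    (hN0 : ∀ s a s', 0 ≤ N s a s') (hNsum : ∀ s a, ∑ s' : S, N s a s' = 1)
    (hM0 : ∀ s a s', 0 ≤ M s a s') (hMsum : ∀ s a, ∑ s' : S, M s a s' = 1)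
    {r : S → A → ℝ} {Rmax Vmax γ εm : ℝ}
    (hr0 : ∀ s a, 0 ≤ r s a) (hrmax : ∀ s a, r s a ≤ Rmax) (hγ0 : 0 ≤ γ)
    {Vhat : S → ℝ} (hV0 : ∀ s, 0 ≤ Vhat s) (hVmax : ∀ s, Vhat s ≤ Vmax)
    (hTV : ∀ s a, ∑ s' : S, |N s a s' - M s a s'| ≤ 2 * εm)
    (hR0 : 0 ≤ Rmax) (hVm0 : 0 ≤ Vmax)
    (H : ℕ) (π : ℕ → S → A) (s : S) :
    |lookahead N r γ Vhat H π s - lookahead M r γ Vhat H π s|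
      ≤ Rmax * ∑ t ∈ Finset.range H, γ ^ t * (t : ℝ) * εm
        + γ ^ H * (H : ℝ) * εm * Vmax := by
  have h1 : ∀ t : ℕ, |(∑ s' : S, stateDist N π s t s' * r s' (π t s'))
      - ∑ s' : S, stateDist M π s t s' * r s' (π t s')| ≤ Rmax * t * εm := by
    intro t
    have hmd := mean_diff (μ := stateDist N π s t) (ν := stateDist M π s t)
      (f := fun s' => r s' (π t s')) (B := Rmax)
      (stateDist_sum hNsum π s t) (stateDist_sum hMsum π s t)
      (fun s' => hr0 s' (π t s')) (fun s' => hrmax s' (π t s'))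
    have htv := tv_accum hN0 hNsum hM0 hMsum hTV π s t
    refine hmd.trans ?_
    calc (Rmax / 2) * ∑ s' : S, |stateDist N π s t s' - stateDist M π s t s'|
        ≤ (Rmax / 2) * (2 * t * εm) := mul_le_mul_of_nonneg_left htv (by linarith)
      _ = Rmax * t * εm := by ring
  have h2 : |(∑ s' : S, stateDist N π s H s' * Vhat s')
      - ∑ s' : S, stateDist M π s H s' * Vhat s'| ≤ Vmax * H * εm := by
    have hmd := mean_diff (μ := stateDist N π s H) (ν := stateDist M π s H)
      (f := Vhat) (B := Vmax)
      (stateDist_sum hNsum π s H) (stateDist_sum hMsum π s H) hV0 hVmax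
    have htv := tv_accum hN0 hNsum hM0 hMsum hTV π s H
    refine hmd.trans ?_
    calc (Vmax / 2) * ∑ s' : S, |stateDist N π s H s' - stateDist M π s H s'|
        ≤ (Vmax / 2) * (2 * H * εm) := mul_le_mul_of_nonneg_left htv (by linarith)
      _ = Vmax * H * εm := by ring
  have heq : lookahead N r γ Vhat H π s - lookahead M r γ Vhat H π s
      = (∑ t ∈ Finset.range H, (γ ^ t * (∑ s' : S, stateDist N π s t s' * r s' (π t s'))
          - γ ^ t * ∑ s' : S, stateDist M π s t s' * r s' (π t s')))
        + γ ^ H * ((∑ s' : S, stateDist N π s H s' * Vhat s')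
          - ∑ s' : S, stateDist M π s H s' * Vhat s') := by
    rw [lookahead, lookahead, Finset.sum_sub_distrib]
    ring
  rw [heq]
  refine (abs_add_le _ _).trans (add_le_add ?_ ?_)
  · refine (Finset.abs_sum_le_sum_abs _ _).trans ?_
    rw [Finset.mul_sum]
    refine Finset.sum_le_sum fun t _ => ?_
    rw [← mul_sub, abs_mul, abs_of_nonneg (pow_nonneg hγ0 t)]
    calc γ ^ t * |(∑ s' : S, stateDist N π s t s' * r s' (π t s'))
          - ∑ s' : S, stateDist M π s t s' * r s' (π t s')|
        ≤ γ ^ t * (Rmax * t * εm) := mul_le_mul_of_nonneg_left (h1 t) (pow_nonneg hγ0 t)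
      _ = Rmax * (γ ^ t * t * εm) := by ring
  · rw [abs_mul, abs_of_nonneg (pow_nonneg hγ0 H)]
    calc γ ^ H * |(∑ s' : S, stateDist N π s H s' * Vhat s')
          - ∑ s' : S, stateDist M π s H s' * Vhat s'|
        ≤ γ ^ H * (Vmax * H * εm) := mul_le_mul_of_nonneg_left h2 (pow_nonneg hγ0 H)
      _ = γ ^ H * H * εm * Vmax := by ring

end Aux2


/-- Performance bound for the H-step lookahead policy with an approximate model and an
approximate terminal value function. -/
theorem h_step_lookahead_bound
    {S A : Type*} [Fintype S] [DecidableEq S] [Nonempty S] [Fintype A] [Nonempty A]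
    (p Mhat : S → A → S → ℝ) (r : S → A → ℝ) (γ Rmax Vmax εm εv : ℝ) (H : ℕ)
    (hp_nonneg : ∀ s a s', 0 ≤ p s a s')
    (hp_sum : ∀ s a, ∑ s' : S, p s a s' = 1)
    (hM_nonneg : ∀ s a s', 0 ≤ Mhat s a s')
    (hM_sum : ∀ s a, ∑ s' : S, Mhat s a s' = 1)
    (hγ0 : 0 < γ) (hγ1 : γ < 1) (hH : 1 ≤ H)
    (hTV : ∀ s a, (1 / 2) * ∑ s' : S, |p s a s' - Mhat s a s'| ≤ εm)
    (Vhat : S → ℝ)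
    (hεv : ∀ s, |vStar p r γ s - Vhat s| ≤ εv)
    (hr0 : ∀ s a, 0 ≤ r s a) (hrmax : ∀ s a, r s a ≤ Rmax)
    (hV0 : ∀ s, 0 ≤ Vhat s) (hVmax : ∀ s, Vhat s ≤ Vmax)
    -- `W` is the (bounded) value of the H-step lookahead policy: for every state `s`,
    -- `σ s` is a maximizer over H-step policies of the lookahead objective under `Mhat`,
    -- and `W` satisfies the corresponding fixed-point equation under the true model `p`.
    (W : S → ℝ) (hWbdd : ∃ B, ∀ s, |W s| ≤ B)
    (σ : S → ℕ → S → A)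
    (hσmax : ∀ s (π : ℕ → S → A),
      lookahead Mhat r γ Vhat H π s ≤ lookahead Mhat r γ Vhat H (σ s) s)
    (hW : ∀ s, W s =
      (∑ t ∈ Finset.range H, γ ^ t * ∑ s' : S, stateDist p (σ s) s t s' * r s' (σ s t s')) +
        γ ^ H * ∑ s' : S, stateDist p (σ s) s H s' * W s')
    (s0 : S) :
    vStar p r γ s0 - W s0 ≤
      (2 / (1 - γ ^ H)) *
        ((Rmax * ∑ t ∈ Finset.range H, γ ^ t * (t : ℝ) * εm + γ ^ H * (H : ℝ) * εm * Vmax) +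
          γ ^ H * εv) := by
  classical
  have hγ0' : 0 ≤ γ := le_of_lt hγ0
  have hpH0 : 0 ≤ γ ^ H := pow_nonneg hγ0' H
  obtain ⟨c⟩ := ‹Nonempty S›
  obtain ⟨a0⟩ := ‹Nonempty A›
  have hR0 : 0 ≤ Rmax := (hr0 c a0).trans (hrmax c a0)
  have hVm0 : 0 ≤ Vmax := (hV0 c).trans (hVmax c)
  have hTV2 : ∀ s a, ∑ s' : S, |p s a s' - Mhat s a s'| ≤ 2 * εm := by
    intro s a; have := hTV s a; linarith
  have hγH : γ ^ H < 1 := pow_lt_one₀ hγ0' hγ1 (by omega)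
  have hden : 0 < 1 - γ ^ H := by linarith
  set C : ℝ := Rmax * ∑ t ∈ Finset.range H, γ ^ t * (t : ℝ) * εm
      + γ ^ H * (H : ℝ) * εm * Vmax with hCdef
  have hBdd : ∀ s1 : S, BddAbove (Set.range fun π : ℕ → S → A => value p r γ π s1) := by
    intro s1
    refine ⟨Rmax * (1 - γ)⁻¹, ?_⟩
    rintro x ⟨π, rfl⟩
    exact value_le hp_nonneg hp_sum hr0 hrmax hγ0' hγ1 π s1
  have hvle : ∀ (π : ℕ → S → A) (s1 : S), value p r γ π s1 ≤ vStar p r γ s1 :=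
    fun π s1 => le_ciSup (hBdd s1) π
  have herr : ∀ (π : ℕ → S → A) (s1 : S),
      |lookahead p r γ Vhat H π s1 - lookahead Mhat r γ Vhat H π s1| ≤ C :=
    fun π s1 => lookahead_err hp_nonneg hp_sum hM_nonneg hM_sum hr0 hrmax hγ0'
      hV0 hVmax hTV2 hR0 hVm0 H π s1
  obtain ⟨sm, _, hsm⟩ := Finset.exists_max_image Finset.univ
    (fun s => vStar p r γ s - W s) ⟨c, Finset.mem_univ c⟩
  set D : ℝ := vStar p r γ sm - W sm with hDdef
  have key : ∀ s1 : S, vStar p r γ s1 - W s1 ≤ 2 * C + 2 * (γ ^ H * εv) + γ ^ H * D := by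
    intro s1
    have hub : ∀ π : ℕ → S → A,
        value p r γ π s1 ≤ W s1 + (2 * C + 2 * (γ ^ H * εv) + γ ^ H * D) := by
      intro π
      have dnn := stateDist_nonneg hp_nonneg π s1 H
      have dsum := stateDist_sum hp_sum π s1 H
      have stepA : value p r γ π s1 ≤ lookahead p r γ (vStar p r γ) H π s1 := by
        rw [value_decomp hp_nonneg hp_sum hr0 hrmax hγ0' hγ1 π s1 H, lookahead]
        refine add_le_add_right (mul_le_mul_of_nonneg_left
          (Finset.sum_le_sum fun s' _ =>
            mul_le_mul_of_nonneg_left (hvle _ s') (dnn s')) hpH0) _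
      have stepB : lookahead p r γ (vStar p r γ) H π s1
          ≤ lookahead p r γ Vhat H π s1 + γ ^ H * εv := by
        have ht := terminal_swap dnn dsum hεv
        have h1 : (∑ s' : S, stateDist p π s1 H s' * vStar p r γ s')
            - ∑ s' : S, stateDist p π s1 H s' * Vhat s' ≤ εv := (le_abs_self _).trans ht
        have h2 := mul_le_mul_of_nonneg_left h1 hpH0
        rw [mul_sub] at h2
        simp only [lookahead]
        linarith
      have stepC : lookahead p r γ Vhat H π s1 ≤ lookahead Mhat r γ Vhat H π s1 + C := by
        have := (abs_le.1 (herr π s1)).2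
        linarith
      have stepD : lookahead Mhat r γ Vhat H π s1 ≤ lookahead Mhat r γ Vhat H (σ s1) s1 :=
        hσmax s1 π
      have stepE : lookahead Mhat r γ Vhat H (σ s1) s1
          ≤ lookahead p r γ Vhat H (σ s1) s1 + C := by
        have := (abs_le.1 (herr (σ s1) s1)).1
        linarith
      have dnn' := stateDist_nonneg hp_nonneg (σ s1) s1 H
      have dsum' := stateDist_sum hp_sum (σ s1) s1 H
      have stepF : lookahead p r γ Vhat H (σ s1) s1
          ≤ lookahead p r γ (vStar p r γ) H (σ s1) s1 + γ ^ H * εv := by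
        have ht := terminal_swap dnn' dsum' hεv
        have h1 : (∑ s' : S, stateDist p (σ s1) s1 H s' * Vhat s')
            - ∑ s' : S, stateDist p (σ s1) s1 H s' * vStar p r γ s' ≤ εv := by
          have := (abs_le.1 ht).1
          linarith
        have h2 := mul_le_mul_of_nonneg_left h1 hpH0
        rw [mul_sub] at h2
        simp only [lookahead]
        linarith
      have stepG : lookahead p r γ (vStar p r γ) H (σ s1) s1 ≤ W s1 + γ ^ H * D := by
        have h1 : (∑ s' : S, stateDist p (σ s1) s1 H s' * vStar p r γ s')
            - ∑ s' : S, stateDist p (σ s1) s1 H s' * W s' ≤ D := by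
          rw [← Finset.sum_sub_distrib]
          have hterm : ∀ s' : S, stateDist p (σ s1) s1 H s' * vStar p r γ s'
              - stateDist p (σ s1) s1 H s' * W s'
              = stateDist p (σ s1) s1 H s' * (vStar p r γ s' - W s') := fun s' => by ring
          simp_rw [hterm]
          exact sum_mul_le_of_le dnn' dsum' (fun s' => hsm s' (Finset.mem_univ s'))
        have h2 := mul_le_mul_of_nonneg_left h1 hpH0
        rw [mul_sub] at h2
        simp only [lookahead]
        rw [hW s1]
        linarith
      linarith
    have : vStar p r γ s1 ≤ W s1 + (2 * C + 2 * (γ ^ H * εv) + γ ^ H * D) := by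
      rw [vStar]
      exact ciSup_le hub
    linarith
  have hD : D ≤ (2 / (1 - γ ^ H)) * (C + γ ^ H * εv) := by
    have h := key sm
    rw [div_mul_eq_mul_div, le_div_iff₀ hden]
    nlinarith
  calc vStar p r γ s0 - W s0 ≤ D := hsm s0 (Finset.mem_univ s0)
    _ ≤ _ := hD
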